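/- Fix parameters a, b ∈ ℂ with a, b, 1-a, 1-b nonzero. Define the partially-defined map S on ℂ² by S(x, y) = (x', y') where P = b*y/(a*x), Q = (1-b)(1-y)/((1-a)(1-x)), y' = (Q-1)/(Q-P), x' = P*y' (defined when x, 1-x are nonzero and P ≠ Q). If (x', y') = S(x, y) is defined and S is also defined at (x', y'), then S(x', y') = (x, y); i.e., S is an involution on its generic domain of definition. -/

import Mathlib

/-- `P` for the F_I map. -/
noncomputable def PFI (a b : ℂ) (p : ℂ × ℂ) : ℂ := b * p.2 / (a * p.1)

/-- `Q` for the F_I map. -/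
noncomputable def QFI (a b : ℂ) (p : ℂ × ℂ) : ℂ :=
  (1 - b) * (1 - p.2) / ((1 - a) * (1 - p.1))

/-- The F_I map with parameters `a, b`. -/
noncomputable def SFI (a b : ℂ) (p : ℂ × ℂ) : ℂ × ℂ :=
  (PFI a b p * ((QFI a b p - 1) / (QFI a b p - PFI a b p)),
   (QFI a b p - 1) / (QFI a b p - PFI a b p))

set_option maxHeartbeats 1000000 in
/-- The F_I map `S` is an involution on its generic domain of definition. -/
theorem stmt_4 (a b x y : ℂ)
    (ha : a ≠ 0) (hb : b ≠ 0) (ha' : 1 - a ≠ 0) (hb' : 1 - b ≠ 0)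
    (hx : x ≠ 0) (hx' : 1 - x ≠ 0) (hPQ : PFI a b (x, y) ≠ QFI a b (x, y))
    (hx2 : (SFI a b (x, y)).1 ≠ 0) (hx2' : 1 - (SFI a b (x, y)).1 ≠ 0)
    (hPQ2 : PFI a b (SFI a b (x, y)) ≠ QFI a b (SFI a b (x, y))) :
    SFI a b (SFI a b (x, y)) = (x, y) := by
  have hax : a * x ≠ 0 := mul_ne_zero ha hx
  have hax' : (1 - a) * (1 - x) ≠ 0 := mul_ne_zero ha' hx'
  set P := b * y / (a * x) with hP
  set Q := (1 - b) * (1 - y) / ((1 - a) * (1 - x)) with hQ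
  have hD : Q - P ≠ 0 := sub_ne_zero.mpr (Ne.symm hPQ)
  set y1 := (Q - 1) / (Q - P) with hy1
  have hS : SFI a b (x, y) = (P * y1, y1) := rfl
  rw [hS] at hx2 hx2' hPQ2 ⊢
  have hPne : P ≠ 0 := fun h => hx2 (by simp [h])
  have hy1ne : y1 ≠ 0 := fun h => hx2 (by simp [h])
  have hyne : y ≠ 0 := by
    intro h; apply hPne; simp [hP, h]
  have h1mx1 : 1 - P * y1 = Q * (1 - P) / (Q - P) := by
    rw [hy1]; field_simp; ring
  have hQne : Q ≠ 0 := by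
    intro h; apply hx2'; rw [h1mx1, h]; simp
  have hPne1 : 1 - P ≠ 0 := by
    intro h; apply hx2'; rw [h1mx1, h]; simp
  have hy'ne : 1 - y ≠ 0 := by
    intro h; apply hQne; simp [hQ, h]
  have hP1 : PFI a b (P * y1, y1) = x / y := by
    simp only [PFI]
    rw [hP]
    field_simp
  have h1my1 : 1 - y1 = (1 - P) / (Q - P) := by
    rw [hy1]; field_simp; ring
  have hQ1 : QFI a b (P * y1, y1) = (1 - x) / (1 - y) := by
    have step1 : QFI a b (P * y1, y1) = (1 - b) / ((1 - a) * Q) := by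
      simp only [QFI]
      rw [h1my1, h1mx1]
      field_simp
    rw [step1, hQ]
    field_simp
  rw [hP1, hQ1] at hPQ2
  have hyx : y - x ≠ 0 := by
    intro h
    apply hPQ2
    have hxy : x = y := by linear_combination -h
    rw [hxy, div_self hyne, div_self hy'ne]
  have hA : (1 - x) / (1 - y) - 1 = (y - x) / (1 - y) := by
    field_simp; ring
  have hB : (1 - x) / (1 - y) - x / y = (y - x) / (y * (1 - y)) := by
    field_simp; ring
  have hy2 : ((1 - x) / (1 - y) - 1) / ((1 - x) / (1 - y) - x / y) = y := by
    rw [hA, hB, div_div_div_eq]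
    rw [div_eq_iff (mul_ne_zero hy'ne hyx)]
    ring
  simp only [SFI, hP1, hQ1, hy2]
  rw [div_mul_cancel₀ _ hyne]
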